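/- arXiv:2307.16329 — 2 statements merged into one kernel-verified Lean document; each statement's English description precedes it below -/
import Mathlib

section
/- Let C_ω = sup_{(i,j)∈E} √ω_{ij}. For ρ ∈ P(G) and skew-symmetric v, ‖div_ρ(v)‖_{ℓ¹} ≤ √2 n C_ω ‖v‖_ρ. Consequently, for an action-minimizing curve σ from ρ⁰ to ρ¹ with velocity v, ‖σ̇(t)‖_{ℓ∞} ≤ √2 n C_ω 𝒲(ρ⁰, ρ¹). -/
open Finset MeasureTheory

/-- The probability simplex `P(G)`. -/
def IsProb {n : ℕ} (ρ : Fin n → ℝ) : Prop := (∀ i, 0 ≤ ρ i) ∧ ∑ i, ρ i = 1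

/-- Skew-symmetric matrices `𝕊^{n×n}`. -/
def Skew {n : ℕ} (v : Fin n → Fin n → ℝ) : Prop := ∀ i j, v i j = - v j i

/-- The weighted inner product `(v,w)_ρ = (1/2) ∑_{(i,j)∈E} g(ρ_i,ρ_j) v_{ij} w_{ij}`. -/
noncomputable def gInner {n : ℕ} (ω : Fin n → Fin n → ℝ) (g : ℝ → ℝ → ℝ)
    (ρ : Fin n → ℝ) (v w : Fin n → Fin n → ℝ) : ℝ :=
  (1/2) * ∑ i, ∑ j, (if ω i j ≠ 0 then g (ρ i) (ρ j) * v i j * w i j else 0)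

/-- The graph gradient `(∇_G φ)_{ij} = √ω_{ij} (φ_i - φ_j)`. -/
noncomputable def gradG {n : ℕ} (ω : Fin n → Fin n → ℝ) (φ : Fin n → ℝ) :
    Fin n → Fin n → ℝ :=
  fun i j => Real.sqrt (ω i j) * (φ i - φ j)

/-- The graph divergence `⟨div_ρ(v)⟩_i = ∑_{j∈N(i)} √ω_{ij} g(ρ_i,ρ_j) v_{ji}`. -/
noncomputable def gdiv {n : ℕ} (ω : Fin n → Fin n → ℝ) (g : ℝ → ℝ → ℝ)
    (ρ : Fin n → ℝ) (v : Fin n → Fin n → ℝ) : Fin n → ℝ :=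
  fun i => ∑ j, Real.sqrt (ω i j) * g (ρ i) (ρ j) * v j i

/-- The euclidean pairing on `ℝ^n`. -/
def dotl2 {n : ℕ} (a b : Fin n → ℝ) : ℝ := ∑ i, a i * b i

/-- The squared graph Wasserstein distance `𝒲²(ρ⁰, ρ¹)` (velocity formulation). -/
noncomputable def W2sqV {n : ℕ} (ω : Fin n → Fin n → ℝ) (g : ℝ → ℝ → ℝ)
    (ρ0 ρ1 : Fin n → ℝ) : ENNReal :=
  ⨅ (σ : ℝ → Fin n → ℝ) (v : ℝ → Fin n → Fin n → ℝ) (_ : Continuous σ)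
    (_ : ∀ t ∈ Set.Icc (0:ℝ) 1, IsProb (σ t)) (_ : ∀ t, Skew (v t))
    (_ : ∀ t ∈ Set.Icc (0:ℝ) 1,
        HasDerivAt σ (fun i => -(gdiv ω g (σ t) (v t) i)) t)
    (_ : σ 0 = ρ0) (_ : σ 1 = ρ1),
    ∫⁻ t in Set.Icc (0:ℝ) 1, ENNReal.ofReal (gInner ω g (σ t) (v t) (v t))

lemma gInner_nonneg {n : ℕ} (ω : Fin n → Fin n → ℝ) (g : ℝ → ℝ → ℝ)
    (ρ : Fin n → ℝ) (v : Fin n → Fin n → ℝ) (hg : ∀ s t, 0 ≤ g s t) :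
    0 ≤ gInner ω g ρ v v := by
  unfold gInner
  apply mul_nonneg (by norm_num)
  refine Finset.sum_nonneg fun i _ => Finset.sum_nonneg fun j _ => ?_
  split
  · rw [mul_assoc]; exact mul_nonneg (hg _ _) (mul_self_nonneg _)
  · exact le_rfl

set_option maxHeartbeats 1000000 in
lemma key_est {n : ℕ} (ω : Fin n → Fin n → ℝ) (g : ℝ → ℝ → ℝ)
    (hgnonneg : ∀ s t, 0 ≤ g s t)
    (hgsum : ∀ s t : ℝ, 0 ≤ s → 0 ≤ t → g s t ≤ s + t)
    (Cω : ℝ) (hC : ∀ i j, Real.sqrt (ω i j) ≤ Cω)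
    (ρ : Fin n → ℝ) (v : Fin n → Fin n → ℝ) (hρ : IsProb ρ) (hv : Skew v) :
    ∑ i, |gdiv ω g ρ v i| ≤ Real.sqrt 2 * n * Cω * Real.sqrt (gInner ω g ρ v v) := by
  classical
  obtain ⟨hρnn, hρs⟩ := hρ
  have hvd : ∀ i, v i i = 0 := fun i => by have := hv i i; linarith
  have hn : 0 < n := by
    rcases Nat.eq_zero_or_pos n with rfl | h
    · simp at hρs
    · exact h
  have hC0 : 0 ≤ Cω := (Real.sqrt_nonneg (ω ⟨0, hn⟩ ⟨0, hn⟩)).trans (hC _ _)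
  have hInn : 0 ≤ gInner ω g ρ v v := gInner_nonneg ω g ρ v hgnonneg
  set A : Fin n → Fin n → ℝ := fun i j =>
    if i ≠ j ∧ ω i j ≠ 0 then Real.sqrt (ω i j) * Real.sqrt (g (ρ i) (ρ j)) else 0 with hA
  set B : Fin n → Fin n → ℝ := fun i j =>
    if i ≠ j ∧ ω i j ≠ 0 then Real.sqrt (g (ρ i) (ρ j)) * |v i j| else 0 with hB
  have hAe : ∀ i j, A i j = if i ≠ j ∧ ω i j ≠ 0
      then Real.sqrt (ω i j) * Real.sqrt (g (ρ i) (ρ j)) else 0 := fun i j => rfl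
  have hBe : ∀ i j, B i j = if i ≠ j ∧ ω i j ≠ 0
      then Real.sqrt (g (ρ i) (ρ j)) * |v i j| else 0 := fun i j => rfl
  have step1 : ∑ i, |gdiv ω g ρ v i|
      ≤ ∑ p : Fin n × Fin n, A p.1 p.2 * B p.1 p.2 := by
    rw [Fintype.sum_prod_type]
    apply Finset.sum_le_sum
    intro i _
    simp only [gdiv]
    refine (Finset.abs_sum_le_sum_abs _ _).trans (Finset.sum_le_sum fun j _ => ?_)
    rw [hAe, hBe]
    by_cases hij : i = j
    · subst hij; simp [hvd]
    by_cases hω : ω i j = 0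
    · simp [hω]
    have hg0 := hgnonneg (ρ i) (ρ j)
    have habs : |v j i| = |v i j| := by rw [hv j i, abs_neg]
    rw [if_pos (show i ≠ j ∧ ω i j ≠ 0 from ⟨hij, hω⟩),
      if_pos (show i ≠ j ∧ ω i j ≠ 0 from ⟨hij, hω⟩)]
    rw [abs_mul, abs_mul, abs_of_nonneg (Real.sqrt_nonneg _), abs_of_nonneg hg0, habs]
    apply le_of_eq
    have hgs : Real.sqrt (g (ρ i) (ρ j)) * Real.sqrt (g (ρ i) (ρ j)) = g (ρ i) (ρ j) :=
      Real.mul_self_sqrt hg0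
    rw [show Real.sqrt (ω i j) * Real.sqrt (g (ρ i) (ρ j))
        * (Real.sqrt (g (ρ i) (ρ j)) * |v i j|)
        = (Real.sqrt (g (ρ i) (ρ j)) * Real.sqrt (g (ρ i) (ρ j)))
          * (Real.sqrt (ω i j) * |v i j|) from by ring, hgs]
    ring
  have hCS := Real.sum_mul_le_sqrt_mul_sqrt Finset.univ
      (fun p : Fin n × Fin n => A p.1 p.2) (fun p => B p.1 p.2)
  have hA2 : ∑ p : Fin n × Fin n, (A p.1 p.2) ^ 2 ≤ Cω ^ 2 * (2 * n - 2) := by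
    rw [Fintype.sum_prod_type]
    have hsplit : ∀ i : Fin n, ∑ j, (if i ≠ j then ρ i + ρ j else 0)
        = (n * ρ i + 1) - (ρ i + ρ i) := by
      intro i
      have hfil : Finset.univ.filter (fun j => i ≠ j) = Finset.univ.erase i := by
        ext x; simp [ne_comm]
      rw [← Finset.sum_filter, hfil, Finset.sum_erase_eq_sub (Finset.mem_univ i),
        Finset.sum_add_distrib, Finset.sum_const, hρs, Finset.card_univ, Fintype.card_fin,
        nsmul_eq_mul]
    calc ∑ i, ∑ j, (A i j) ^ 2
        ≤ ∑ i, ∑ j, (if i ≠ j then Cω ^ 2 * (ρ i + ρ j) else 0) := by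
          refine Finset.sum_le_sum fun i _ => Finset.sum_le_sum fun j _ => ?_
          rw [hAe]
          by_cases hij : i = j
          · simp [hij]
          by_cases hω : ω i j = 0
          · rw [if_neg (by tauto), if_pos (show i ≠ j from hij)]
            have : (0:ℝ)^2 = 0 := by norm_num
            rw [this]
            exact mul_nonneg (sq_nonneg _) (add_nonneg (hρnn i) (hρnn j))
          · rw [if_pos (show i ≠ j ∧ ω i j ≠ 0 from ⟨hij, hω⟩),
              if_pos (show i ≠ j from hij)]
            have h1 : Real.sqrt (ω i j) ^ 2 ≤ Cω ^ 2 := by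
              have := hC i j
              nlinarith [Real.sqrt_nonneg (ω i j)]
            have h2 : Real.sqrt (g (ρ i) (ρ j)) ^ 2 = g (ρ i) (ρ j) :=
              Real.sq_sqrt (hgnonneg _ _)
            rw [mul_pow, h2]
            exact mul_le_mul h1 (hgsum _ _ (hρnn i) (hρnn j)) (hgnonneg _ _) (sq_nonneg _)
      _ = Cω ^ 2 * (2 * n - 2) := by
          have hpull : ∀ i j : Fin n, (if i ≠ j then Cω ^ 2 * (ρ i + ρ j) else 0)
              = Cω ^ 2 * (if i ≠ j then ρ i + ρ j else 0) := by
            intro i j; split <;> simp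
          simp_rw [hpull, ← Finset.mul_sum, hsplit]
          have : ∑ i, ((n : ℝ) * ρ i + 1 - (ρ i + ρ i)) = 2 * n - 2 := by
            rw [Finset.sum_sub_distrib, Finset.sum_add_distrib, Finset.sum_add_distrib,
              ← Finset.mul_sum, hρs, Finset.sum_const, Finset.card_univ, Fintype.card_fin,
              nsmul_eq_mul, mul_one]
            ring
          rw [this]
  have hB2 : ∑ p : Fin n × Fin n, (B p.1 p.2) ^ 2 ≤ 2 * gInner ω g ρ v v := by
    rw [Fintype.sum_prod_type]
    have h2I : 2 * gInner ω g ρ v v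
        = ∑ i, ∑ j, (if ω i j ≠ 0 then g (ρ i) (ρ j) * v i j * v i j else 0) := by
      rw [gInner]; ring
    rw [h2I]
    refine Finset.sum_le_sum fun i _ => Finset.sum_le_sum fun j _ => ?_
    rw [hBe]
    by_cases hc : i ≠ j ∧ ω i j ≠ 0
    · rw [if_pos hc, if_pos hc.2]
      apply le_of_eq
      rw [mul_pow, Real.sq_sqrt (hgnonneg _ _), sq_abs]
      ring
    · rw [if_neg hc]
      have : (0:ℝ)^2 = 0 := by norm_num
      rw [this]
      split
      · rw [mul_assoc]; exact mul_nonneg (hgnonneg _ _) (mul_self_nonneg _)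
      · exact le_rfl
  have hsqn : Real.sqrt (2 * n - 2) ≤ n := by
    have h0 : (1:ℝ) ≤ n := by exact_mod_cast hn
    have h1 : (2 * (n : ℝ) - 2) ≤ (n : ℝ) ^ 2 := by nlinarith
    calc Real.sqrt (2 * n - 2) ≤ Real.sqrt ((n : ℝ) ^ 2) := Real.sqrt_le_sqrt h1
      _ = n := Real.sqrt_sq (Nat.cast_nonneg n)
  calc ∑ i, |gdiv ω g ρ v i|
      ≤ ∑ p : Fin n × Fin n, A p.1 p.2 * B p.1 p.2 := step1
    _ ≤ Real.sqrt (∑ p : Fin n × Fin n, (A p.1 p.2) ^ 2)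
        * Real.sqrt (∑ p : Fin n × Fin n, (B p.1 p.2) ^ 2) := hCS
    _ ≤ Real.sqrt (Cω ^ 2 * (2 * n - 2)) * Real.sqrt (2 * gInner ω g ρ v v) :=
        mul_le_mul (Real.sqrt_le_sqrt hA2) (Real.sqrt_le_sqrt hB2)
          (Real.sqrt_nonneg _) (Real.sqrt_nonneg _)
    _ = Cω * Real.sqrt (2 * n - 2) * (Real.sqrt 2 * Real.sqrt (gInner ω g ρ v v)) := by
        rw [Real.sqrt_mul (sq_nonneg _), Real.sqrt_sq hC0,
          Real.sqrt_mul (by norm_num : (0:ℝ) ≤ 2)]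
    _ ≤ Cω * n * (Real.sqrt 2 * Real.sqrt (gInner ω g ρ v v)) := by
        apply mul_le_mul_of_nonneg_right (mul_le_mul_of_nonneg_left hsqn hC0)
        positivity
    _ = Real.sqrt 2 * n * Cω * Real.sqrt (gInner ω g ρ v v) := by ring

/-- `‖div_ρ(v)‖_{ℓ¹} ≤ √2 n C_ω ‖v‖_ρ`, and hence an action-minimizing
constant-speed curve has `‖σ̇(t)‖_{ℓ∞} ≤ √2 n C_ω 𝒲(ρ⁰,ρ¹)`. -/
theorem stmt7 {n : ℕ} (ω : Fin n → Fin n → ℝ) (g : ℝ → ℝ → ℝ)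
    (hωsym : ∀ i j, ω i j = ω j i) (hωnonneg : ∀ i j, 0 ≤ ω i j)
    (hgsym : ∀ s t, g s t = g t s) (hgnonneg : ∀ s t, 0 ≤ g s t)
    (hgsum : ∀ s t : ℝ, 0 ≤ s → 0 ≤ t → g s t ≤ s + t)
    (Cω : ℝ) (hC : ∀ i j, Real.sqrt (ω i j) ≤ Cω) :
    (∀ (ρ : Fin n → ℝ) (v : Fin n → Fin n → ℝ), IsProb ρ → Skew v →
      ∑ i, |gdiv ω g ρ v i|
        ≤ Real.sqrt 2 * n * Cω * Real.sqrt (gInner ω g ρ v v)) ∧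
    (∀ (ρ0 ρ1 : Fin n → ℝ) (σ : ℝ → Fin n → ℝ) (v : ℝ → Fin n → Fin n → ℝ),
      IsProb ρ0 → IsProb ρ1 → W2sqV ω g ρ0 ρ1 ≠ ⊤ →
      (∀ t ∈ Set.Icc (0:ℝ) 1, IsProb (σ t)) → (∀ t, Skew (v t)) →
      (∀ t ∈ Set.Icc (0:ℝ) 1,
        HasDerivAt σ (fun i => -(gdiv ω g (σ t) (v t) i)) t) →
      σ 0 = ρ0 → σ 1 = ρ1 →
      (∀ t ∈ Set.Icc (0:ℝ) 1,
        ENNReal.ofReal (gInner ω g (σ t) (v t) (v t)) ≤ W2sqV ω g ρ0 ρ1) →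
      ∀ t ∈ Set.Icc (0:ℝ) 1, ∀ i,
        |gdiv ω g (σ t) (v t) i|
          ≤ Real.sqrt 2 * n * Cω * Real.sqrt (W2sqV ω g ρ0 ρ1).toReal) := by
  have key := fun ρ v hρ hv => key_est ω g hgnonneg hgsum Cω hC ρ v hρ hv
  refine ⟨key, ?_⟩
  intro ρ0 ρ1 σ v hρ0 hρ1 hW hσP hvS hderiv h0 h1 hle t ht i
  have hn : 0 < n := by
    rcases Nat.eq_zero_or_pos n with rfl | h
    · have := hρ0.2; simp at this
    · exact h
  have hC0 : 0 ≤ Cω := (Real.sqrt_nonneg (ω ⟨0, hn⟩ ⟨0, hn⟩)).trans (hC _ _)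
  have hkey := key (σ t) (v t) (hσP t ht) (hvS t)
  have hsingle : |gdiv ω g (σ t) (v t) i| ≤ ∑ k, |gdiv ω g (σ t) (v t) k| :=
    Finset.single_le_sum (f := fun k => |gdiv ω g (σ t) (v t) k|)
      (fun k _ => abs_nonneg _) (Finset.mem_univ i)
  have hIn : 0 ≤ gInner ω g (σ t) (v t) (v t) := gInner_nonneg _ _ _ _ hgnonneg
  have hle' : gInner ω g (σ t) (v t) (v t) ≤ (W2sqV ω g ρ0 ρ1).toReal := by
    have h := ENNReal.toReal_mono hW (hle t ht)
    rwa [ENNReal.toReal_ofReal hIn] at h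
  refine hsingle.trans (hkey.trans ?_)
  exact mul_le_mul_of_nonneg_left (Real.sqrt_le_sqrt hle')
    (mul_nonneg (mul_nonneg (Real.sqrt_nonneg 2) (Nat.cast_nonneg n)) hC0)
end

section
/- For any ρ ∈ P(G), the two definitions of tangent space coincide: T¹_ρP(G) (the closure of gradient fields in ‖·‖_ρ) equals T²_ρP(G) = Π_ρ(𝕊ⁿˣⁿ), where Π_ρ(w) is the element of minimal ‖·‖_ρ-norm among velocity representatives {v : div_ρ(w − v) = 0}. -/
open Finset MeasureTheory

/-- The tangent space `T¹_ρ P(G)`: the `‖·‖_ρ`-closure of gradient fields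
in the skew-symmetric matrices. -/
def T1 {n : ℕ} (ω : Fin n → Fin n → ℝ) (g : ℝ → ℝ → ℝ) (ρ : Fin n → ℝ) :
    Set (Fin n → Fin n → ℝ) :=
  {v | Skew v ∧ ∀ ε > (0:ℝ), ∃ φ : Fin n → ℝ,
    gInner ω g ρ (v - gradG ω φ) (v - gradG ω φ) < ε}

/-- The tangent space `T²_ρ P(G) = Π_ρ(𝕊ⁿˣⁿ)`: skew-symmetric fields of minimal
`‖·‖_ρ`-norm within their own divergence class. -/
def T2 {n : ℕ} (ω : Fin n → Fin n → ℝ) (g : ℝ → ℝ → ℝ) (ρ : Fin n → ℝ) :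
    Set (Fin n → Fin n → ℝ) :=
  {u | Skew u ∧ ∀ v : Fin n → Fin n → ℝ, Skew v →
    gdiv ω g ρ v = gdiv ω g ρ u → gInner ω g ρ u u ≤ gInner ω g ρ v v}

section Aux

variable {n : ℕ} (ω : Fin n → Fin n → ℝ) (g : ℝ → ℝ → ℝ) (ρ : Fin n → ℝ)

lemma gInner_self_nonneg (hg : ∀ s t, 0 ≤ g s t) (v : Fin n → Fin n → ℝ) :
    0 ≤ gInner ω g ρ v v := by
  unfold gInner
  apply mul_nonneg (by norm_num)
  apply Finset.sum_nonneg; intro i _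
  apply Finset.sum_nonneg; intro j _
  split
  · rw [mul_assoc]; exact mul_nonneg (hg _ _) (mul_self_nonneg _)
  · exact le_rfl

lemma gInner_comm (v w : Fin n → Fin n → ℝ) :
    gInner ω g ρ v w = gInner ω g ρ w v := by
  unfold gInner
  congr 1
  refine Finset.sum_congr rfl fun i _ => Finset.sum_congr rfl fun j _ => ?_
  split <;> ring

lemma gInner_sub_left (u v w : Fin n → Fin n → ℝ) :
    gInner ω g ρ (u - v) w = gInner ω g ρ u w - gInner ω g ρ v w := by
  unfold gInner
  rw [← mul_sub]; congr 1
  rw [← Finset.sum_sub_distrib]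
  refine Finset.sum_congr rfl fun i _ => ?_
  rw [← Finset.sum_sub_distrib]
  refine Finset.sum_congr rfl fun j _ => ?_
  split
  · simp only [Pi.sub_apply]; ring
  · ring

lemma gInner_sub_right (u v w : Fin n → Fin n → ℝ) :
    gInner ω g ρ u (v - w) = gInner ω g ρ u v - gInner ω g ρ u w := by
  rw [gInner_comm, gInner_sub_left, gInner_comm ω g ρ v u, gInner_comm ω g ρ w u]

lemma gInner_expand (u v : Fin n → Fin n → ℝ) :
    gInner ω g ρ (u - v) (u - v)
      = gInner ω g ρ u u - 2 * gInner ω g ρ u v + gInner ω g ρ v v := by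
  rw [gInner_sub_left, gInner_sub_right, gInner_sub_right,
    gInner_comm ω g ρ v u]
  ring

lemma skew_gradG (hωsym : ∀ i j, ω i j = ω j i) (φ : Fin n → ℝ) :
    Skew (gradG ω φ) := by
  intro i j
  unfold gradG
  rw [hωsym]; ring

lemma skew_sub {u v : Fin n → Fin n → ℝ} (hu : Skew u) (hv : Skew v) :
    Skew (u - v) := by
  intro i j
  simp only [Pi.sub_apply, hu i j, hv i j]; ring

/-- Integration by parts. -/
lemma gInner_gradG (hωsym : ∀ i j, ω i j = ω j i) (hgsym : ∀ s t, g s t = g t s)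
    {v : Fin n → Fin n → ℝ} (hv : Skew v) (φ : Fin n → ℝ) :
    gInner ω g ρ v (gradG ω φ) = - dotl2 (gdiv ω g ρ v) φ := by
  have key : ∀ i j, (if ω i j ≠ 0 then g (ρ i) (ρ j) * v i j * (gradG ω φ i j) else 0)
      = g (ρ i) (ρ j) * Real.sqrt (ω i j) * v i j * φ i
        - g (ρ i) (ρ j) * Real.sqrt (ω i j) * v i j * φ j := by
    intro i j
    unfold gradG
    split
    · ring
    · next h =>
      push_neg at h
      rw [h, Real.sqrt_zero]; ring
  unfold gInner
  simp only [key]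
  simp only [Finset.sum_sub_distrib]
  have swap : ∑ i, ∑ j, g (ρ i) (ρ j) * Real.sqrt (ω i j) * v i j * φ j
      = - ∑ i, ∑ j, g (ρ i) (ρ j) * Real.sqrt (ω i j) * v i j * φ i := by
    rw [Finset.sum_comm, ← Finset.sum_neg_distrib]
    refine Finset.sum_congr rfl fun i _ => ?_
    rw [← Finset.sum_neg_distrib]
    refine Finset.sum_congr rfl fun j _ => ?_
    rw [hgsym, hωsym, hv j i]
    ring
  rw [swap]
  have hdot : dotl2 (gdiv ω g ρ v) φ
      = - ∑ i, ∑ j, g (ρ i) (ρ j) * Real.sqrt (ω i j) * v i j * φ i := by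
    unfold dotl2 gdiv
    rw [← Finset.sum_neg_distrib]
    refine Finset.sum_congr rfl fun i _ => ?_
    rw [Finset.sum_mul, ← Finset.sum_neg_distrib]
    refine Finset.sum_congr rfl fun j _ => ?_
    rw [hv j i]; ring
  rw [hdot]; ring

lemma gdiv_sub (u v : Fin n → Fin n → ℝ) :
    gdiv ω g ρ (u - v) = gdiv ω g ρ u - gdiv ω g ρ v := by
  funext i
  simp only [gdiv, Pi.sub_apply, mul_sub, Finset.sum_sub_distrib]

lemma dotl2_zero_of_forall {d : Fin n → ℝ} (h : ∀ ψ, dotl2 d ψ = 0) : d = 0 := by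
  funext i
  have := h (Pi.single i 1)
  simpa [dotl2, Pi.single_apply, mul_ite, Finset.sum_ite_eq'] using this

/-- The linear realization of the seminorm. -/
noncomputable def Tmap : (Fin n → Fin n → ℝ) →ₗ[ℝ] EuclideanSpace ℝ (Fin n × Fin n) where
  toFun v := WithLp.toLp 2 fun p : Fin n × Fin n => (if ω p.1 p.2 ≠ 0 then Real.sqrt (g (ρ p.1) (ρ p.2)) else 0) * v p.1 p.2
  map_add' u v := by ext p; simp [mul_add]
  map_smul' c v := by ext p; simp only [Pi.smul_apply, smul_eq_mul, PiLp.smul_apply, PiLp.toLp_apply, RingHom.id_apply]; split <;> ring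

lemma gInner_eq_inner (hg : ∀ s t, 0 ≤ g s t) (v w : Fin n → Fin n → ℝ) :
    gInner ω g ρ v w = (1/2) * (inner ℝ (Tmap ω g ρ v) (Tmap ω g ρ w) : ℝ) := by
  unfold gInner Tmap
  congr 1
  rw [PiLp.inner_apply]
  rw [Fintype.sum_prod_type]
  refine Finset.sum_congr rfl fun i _ => Finset.sum_congr rfl fun j _ => ?_
  simp only [LinearMap.coe_mk, AddHom.coe_mk, PiLp.toLp_apply, RCLike.inner_apply, starRingEnd_apply, star_trivial]
  split
  · next h =>
    have : Real.sqrt (g (ρ i) (ρ j)) * Real.sqrt (g (ρ i) (ρ j)) = g (ρ i) (ρ j) :=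
      Real.mul_self_sqrt (hg _ _)
    linear_combination (- v i j * w i j) * this
  · ring

end Aux

/-- the two definitions of the tangent space coincide: `T¹_ρ P(G) = T²_ρ P(G)`. -/
theorem stmt10 {n : ℕ} (ω : Fin n → Fin n → ℝ) (g : ℝ → ℝ → ℝ)
    (hωsym : ∀ i j, ω i j = ω j i) (hωnonneg : ∀ i j, 0 ≤ ω i j)
    (hgsym : ∀ s t, g s t = g t s) (hgnonneg : ∀ s t, 0 ≤ g s t)
    (ρ : Fin n → ℝ) (hρ : IsProb ρ) :
    T1 ω g ρ = T2 ω g ρ := by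
  ext v
  constructor
  · -- T1 ⊆ T2
    rintro ⟨hskew, happrox⟩
    refine ⟨hskew, fun w hwskew hdiv => ?_⟩
    -- show gInner v v ≤ gInner w w
    have key : ∀ ε > (0:ℝ), gInner ω g ρ v v ≤ gInner ω g ρ w w + ε := by
      intro ε hε
      obtain ⟨φ, hφ⟩ := happrox ε hε
      have h1 : gInner ω g ρ w (gradG ω φ) = gInner ω g ρ v (gradG ω φ) := by
        rw [gInner_gradG ω g ρ hωsym hgsym hwskew, gInner_gradG ω g ρ hωsym hgsym hskew, hdiv]
      have h2 : 0 ≤ gInner ω g ρ (w - gradG ω φ) (w - gradG ω φ) :=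
        gInner_self_nonneg ω g ρ hgnonneg _
      rw [gInner_expand] at h2 hφ
      nlinarith
    by_contra hlt
    push_neg at hlt
    have := key ((gInner ω g ρ v v - gInner ω g ρ w w)/2) (by linarith)
    linarith
  · -- T2 ⊆ T1
    rintro ⟨hskew, hmin⟩
    refine ⟨hskew, fun ε hε => ?_⟩
    -- orthogonal projection argument
    set E := EuclideanSpace ℝ (Fin n × Fin n)
    let gradLin : (Fin n → ℝ) →ₗ[ℝ] (Fin n → Fin n → ℝ) :=
      { toFun := gradG ω
        map_add' := fun a b => by funext i j; simp [gradG]; ring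
        map_smul' := fun c a => by funext i j; simp [gradG]; ring }
    let L : (Fin n → ℝ) →ₗ[ℝ] E := (Tmap ω g ρ).comp gradLin
    let K : Submodule ℝ E := LinearMap.range L
    haveI : FiniteDimensional ℝ K := by
      apply FiniteDimensional.finiteDimensional_submodule
    obtain ⟨φ, hφ⟩ : ∃ φ, L φ = (K.orthogonalProjectionOnto (Tmap ω g ρ v) : E) :=
      (K.orthogonalProjectionOnto (Tmap ω g ρ v)).2
    have horth : ∀ ψ, gInner ω g ρ (v - gradG ω φ) (gradG ω ψ) = 0 := by
      intro ψ
      have hmem : Tmap ω g ρ v - L φ ∈ Kᗮ := by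
        rw [hφ]
        exact K.sub_starProjection_mem_orthogonal _
      have hinK : L ψ ∈ K := LinearMap.mem_range_self L ψ
      have hz : (inner ℝ (Tmap ω g ρ v - L φ) (L ψ) : ℝ) = 0 := by
        first
        | exact hmem (L ψ) hinK
        | (rw [real_inner_comm]; exact hmem (L ψ) hinK)
      rw [gInner_eq_inner ω g ρ hgnonneg]
      have hmap : Tmap ω g ρ (v - gradG ω φ) = Tmap ω g ρ v - L φ := by
        simp [L, map_sub, LinearMap.comp_apply]
        rfl
      have hL : Tmap ω g ρ (gradG ω ψ) = L ψ := rfl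
      rw [hmap, hL, hz]; ring
    have hdivzero : gdiv ω g ρ (v - gradG ω φ) = 0 := by
      apply dotl2_zero_of_forall
      intro ψ
      have := horth ψ
      rw [gInner_gradG ω g ρ hωsym hgsym (skew_sub hskew (skew_gradG ω hωsym φ)) ψ] at this
      linarith
    have hdiveq : gdiv ω g ρ (gradG ω φ) = gdiv ω g ρ v := by
      have := gdiv_sub ω g ρ v (gradG ω φ)
      rw [hdivzero] at this
      have h2 : gdiv ω g ρ v - gdiv ω g ρ (gradG ω φ) = 0 := this.symm
      funext i
      have := congrFun h2 i
      simp only [Pi.sub_apply, Pi.zero_apply] at this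
      linarith
    have hle : gInner ω g ρ v v ≤ gInner ω g ρ (gradG ω φ) (gradG ω φ) :=
      hmin _ (skew_gradG ω hωsym φ) hdiveq
    refine ⟨φ, ?_⟩
    have hcross := horth φ
    have hexp := gInner_expand ω g ρ v (gradG ω φ)
    -- (v - ∇φ, ∇φ) = (v,∇φ) - (∇φ,∇φ) = 0
    have h3 : gInner ω g ρ v (gradG ω φ) = gInner ω g ρ (gradG ω φ) (gradG ω φ) := by
      have := gInner_sub_left ω g ρ v (gradG ω φ) (gradG ω φ)
      rw [hcross] at this
      linarith
    have hnn := gInner_self_nonneg ω g ρ hgnonneg (v - gradG ω φ)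
    rw [hexp, h3]
    nlinarith
end
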